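/- For every Fibonacci word F_k with k ≥ 2, χ(F_k) ≤ 4; that is, the string F_k$ has a suffixient set of size at most 4. -/

import Mathlib

variable {α : Type*}

/-- `x` is a right-maximal substring of `w`. -/
def RightMaximal (w x : List α) : Prop :=
  ∃ a b : α, a ≠ b ∧ (x ++ [a]) <:+: w ∧ (x ++ [b]) <:+: w

/-- `y` is a right-extension of `w`. -/
def RightExt (w y : List α) : Prop :=
  ∃ (x : List α) (a : α), RightMaximal w x ∧ y = x ++ [a] ∧ y <:+: w

/-- `y` is a supermaximal right-extension of `w`: a right-extension that is not a
proper suffix of any other right-extension. -/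
def Supermaximal (w y : List α) : Prop :=
  RightExt w y ∧ ∀ z, RightExt w z → y <:+ z → z = y

/-- The number of supermaximal right-extensions of `w`. -/
noncomputable def sre (w : List α) : ℕ :=
  {y | Supermaximal w y}.ncard

/-- `S` is a suffixient set for `w` (positions are 1-indexed). -/
def Suffixient (w : List α) (S : Finset ℕ) : Prop :=
  (∀ j ∈ S, 1 ≤ j ∧ j ≤ w.length) ∧
  ∀ y, RightExt w y → ∃ j ∈ S, y <:+ w.take j

/-- Fibonacci words over the alphabet {a, b} encoded as {0, 1} (a = 0, b = 1);
the symbol $ is encoded as 2. -/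
def fibWord : ℕ → List ℕ
  | 0 => []
  | 1 => [1]
  | 2 => [0]
  | n + 3 => fibWord (n + 2) ++ fibWord (n + 1)

/-! ### Auxiliary material -/

namespace ChiFib

/-- The Fibonacci morphism: `0 ↦ [0,1]`, anything else `↦ [0]`. -/
def phi (w : List ℕ) : List ℕ := w.flatMap (fun c => if c = 0 then [0,1] else [0])

@[simp] lemma phi_nil : phi [] = [] := rfl

@[simp] lemma phi_append (u v : List ℕ) : phi (u ++ v) = phi u ++ phi v := by
  simp [phi]

lemma phi_cons (a : ℕ) (u : List ℕ) :
    phi (a :: u) = (if a = 0 then [0,1] else [0]) ++ phi u := rfl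

@[simp] lemma phi_cons_zero (u : List ℕ) : phi (0 :: u) = 0 :: 1 :: phi u := rfl

lemma phi_cons_ne (a : ℕ) (u : List ℕ) (h : a ≠ 0) : phi (a :: u) = 0 :: phi u := by
  simp [phi_cons, h]

lemma phi_eq_nil_iff (u : List ℕ) : phi u = [] ↔ u = [] := by
  cases u with
  | nil => simp
  | cons a u => constructor <;> intro h <;> simp [phi_cons] at h <;> split at h <;> simp_all

lemma phi_ne_nil {u : List ℕ} (h : u ≠ []) : phi u ≠ [] := by
  simpa [phi_eq_nil_iff]

lemma mem_phi_binary {c : ℕ} {u : List ℕ} (h : c ∈ phi u) : c = 0 ∨ c = 1 := by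
  simp only [phi, List.mem_flatMap] at h
  obtain ⟨a, -, hm⟩ := h
  split at hm <;> simp_all <;> omega

lemma phi_head (u : List ℕ) (h : u ≠ []) : ∃ r, phi u = 0 :: r := by
  cases u with
  | nil => simp at h
  | cons a u =>
    by_cases ha : a = 0
    · subst ha; exact ⟨1 :: phi u, rfl⟩
    · exact ⟨phi u, phi_cons_ne a u ha⟩

lemma phi_concat_zero (y : List ℕ) : phi (y ++ [0]) = phi y ++ [0, 1] := by simp [phi]

lemma phi_concat_one (y : List ℕ) : phi (y ++ [1]) = phi y ++ [0] := by simp [phi]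

/-- A prefix of `phi u` followed by `0` is block-aligned. -/
lemma prefix_align (u : List ℕ) : ∀ s, (s ++ [0]) <+: phi u →
    ∃ u₁ u₂, u = u₁ ++ u₂ ∧ s = phi u₁ := by
  induction u with
  | nil => intro s h; simp at h
  | cons b u ih =>
    intro s h
    cases s with
    | nil => exact ⟨[], b :: u, rfl, rfl⟩
    | cons c s' =>
      by_cases hb : b = 0
      · subst hb
        simp only [phi_cons_zero, List.cons_append, List.cons_prefix_cons] at h
        obtain ⟨rfl, h⟩ := h
        cases s' with
        | nil => simp [List.cons_prefix_cons] at h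
        | cons c₂ s'' =>
          simp only [List.cons_append, List.cons_prefix_cons] at h
          obtain ⟨rfl, h⟩ := h
          obtain ⟨u₁, u₂, rfl, rfl⟩ := ih s'' h
          exact ⟨0 :: u₁, u₂, rfl, rfl⟩
      · rw [phi_cons_ne b u hb] at h
        simp only [List.cons_append, List.cons_prefix_cons] at h
        obtain ⟨rfl, h⟩ := h
        obtain ⟨u₁, u₂, rfl, rfl⟩ := ih s' h
        exact ⟨b :: u₁, u₂, rfl, (phi_cons_ne b u₁ hb).symm⟩

/-- Binary words. -/
def Bin (l : List ℕ) : Prop := ∀ c ∈ l, c = 0 ∨ c = 1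

lemma Bin.tail {a : ℕ} {l : List ℕ} (h : Bin (a :: l)) : Bin l :=
  fun c hc => h c (List.mem_cons_of_mem a hc)

lemma Bin.head {a : ℕ} {l : List ℕ} (h : Bin (a :: l)) : a = 0 ∨ a = 1 :=
  h a List.mem_cons_self

/-- Desubstitution of prefixes: `phi v ++ [0] <+: phi w` gives `v` + one char prefix of `w`. -/
lemma pre_desub : ∀ (v w : List ℕ), Bin v → Bin w → (phi v ++ [0]) <+: phi w →
    ∃ d, (v ++ [d]) <+: w := by
  intro v
  induction v with
  | nil =>
    intro w _ _ h
    cases w with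
    | nil => simp at h
    | cons b w' => exact ⟨b, by simp⟩
  | cons a v' ih =>
    intro w hv hw h
    cases w with
    | nil => simp [phi_eq_nil_iff, phi_cons] at h
    | cons b w' =>
      by_cases ha : a = 0 <;> by_cases hb : b = 0
      · subst ha hb
        simp only [phi_cons_zero, List.cons_append, List.cons_prefix_cons] at h
        obtain ⟨d, hd⟩ := ih w' hv.tail hw.tail h.2.2
        exact ⟨d, by simpa [List.cons_prefix_cons] using hd⟩
      · subst ha
        rw [phi_cons_ne b w' hb] at h
        simp only [phi_cons_zero, List.cons_append, List.cons_prefix_cons] at h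
        obtain ⟨-, h⟩ := h
        -- h : 1 :: ... <+: phi w'  -- contradiction: phi w' starts with 0 or is empty
        exfalso
        rcases List.eq_nil_or_concat w' with rfl | _
        · simp at h
        · obtain ⟨r, hr⟩ := phi_head w' (by rename_i hw; obtain ⟨a, b, rfl⟩ := hw; simp)
          rw [hr] at h
          simp [List.cons_prefix_cons] at h
      · subst hb
        rw [phi_cons_ne a v' ha] at h
        simp only [phi_cons_zero, List.cons_append, List.cons_prefix_cons] at h
        obtain ⟨-, h⟩ := h
        exfalso
        -- h : (phi v' ++ [0]) <+: 1 :: phi w' but LHS starts with 0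
        rcases List.eq_nil_or_concat v' with rfl | hv'
        · simp [List.cons_prefix_cons] at h
        · obtain ⟨r, hr⟩ := phi_head v' (by obtain ⟨a, b, rfl⟩ := hv'; simp)
          rw [hr] at h
          simp [List.cons_prefix_cons] at h
      · rw [phi_cons_ne a v' ha, phi_cons_ne b w' hb] at h
        simp only [List.cons_append, List.cons_prefix_cons] at h
        obtain ⟨d, hd⟩ := ih w' hv.tail hw.tail h.2
        have ha1 : a = 1 := by rcases hv.head with h' | h' <;> omega
        have hb1 : b = 1 := by rcases hw.head with h' | h' <;> omega
        subst ha1; subst hb1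
        refine ⟨d, ?_⟩
        rw [List.cons_append, List.cons_prefix_cons]
        exact ⟨rfl, hd⟩

lemma Bin.infix {z u : List ℕ} (hu : Bin u) (h : z <:+: u) : Bin z :=
  fun c hc => hu c (h.sublist.mem hc)

lemma Bin.of_append_right {u v : List ℕ} (h : Bin (u ++ v)) : Bin v :=
  fun c hc => h c (List.mem_append_right u hc)

/-- `phi` preserves suffixes. -/
lemma phi_suffix {y y' : List ℕ} (h : y <:+ y') : phi y <:+ phi y' := by
  obtain ⟨s, rfl⟩ := h
  exact ⟨phi s, (phi_append s y).symm⟩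

lemma phi_getLast_one {y : List ℕ} (h : (phi y).getLast? = some 1) :
    ∃ y', y = y' ++ [0] := by
  rcases List.eq_nil_or_concat y with rfl | ⟨y', a, rfl⟩
  · simp at h
  · simp only [List.concat_eq_append] at *
    by_cases ha : a = 0
    · exact ⟨y', by rw [ha]⟩
    · rw [phi_append, phi_cons_ne a [] ha] at h
      simp at h

lemma phi_eq_cons_cons {y₂ r : List ℕ} (h : phi y₂ = 0 :: 1 :: r) : ∃ y₃, y₂ = 0 :: y₃ := by
  cases y₂ with
  | nil => simp at h
  | cons a y₃ =>
    by_cases ha : a = 0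
    · exact ⟨y₃, by rw [ha]⟩
    · rw [phi_cons_ne a y₃ ha] at h
      exfalso
      rcases List.eq_nil_or_concat y₃ with rfl | ⟨z, b, rfl⟩
      · simp at h
      · simp only [List.concat_eq_append] at *
        obtain ⟨r', hr⟩ := phi_head (z ++ [b]) (by simp)
        rw [hr] at h; simp at h

/-- `phi v <+: phi w` with `v` ending in `0` cancels. -/
lemma pre_cancel : ∀ (v w : List ℕ), Bin v → Bin w → v.getLast? = some 0 →
    phi v <+: phi w → v <+: w := by
  intro v
  induction v with
  | nil => intro w _ _ h; simp at h
  | cons a v' ih =>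
    intro w hv hw hlast h
    cases w with
    | nil =>
      rw [phi_nil, List.prefix_nil, phi_eq_nil_iff] at h
      simp at h
    | cons b w' =>
      by_cases ha : a = 0 <;> by_cases hb : b = 0
      · subst ha hb
        simp only [phi_cons_zero, List.cons_prefix_cons] at h
        obtain ⟨-, -, h⟩ := h
        cases v' with
        | nil => simp [List.cons_prefix_cons]
        | cons a₂ v'' =>
          have : (a₂ :: v'').getLast? = some 0 := by
            rwa [List.getLast?_cons_cons] at hlast
          have := ih w' hv.tail hw.tail this h
          simpa [List.cons_prefix_cons]
      · subst ha
        rw [phi_cons_ne b w' hb] at h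
        simp only [phi_cons_zero, List.cons_prefix_cons] at h
        obtain ⟨-, h⟩ := h
        exfalso
        rcases List.eq_nil_or_concat w' with rfl | ⟨z, c, rfl⟩
        · simp at h
        · simp only [List.concat_eq_append] at *
          obtain ⟨r, hr⟩ := phi_head (z ++ [c]) (by simp)
          rw [hr] at h; simp [List.cons_prefix_cons] at h
      · subst hb
        rw [phi_cons_ne a v' ha] at h
        simp only [phi_cons_zero, List.cons_prefix_cons] at h
        obtain ⟨-, h⟩ := h
        exfalso
        have hv' : v' ≠ [] := by
          rintro rfl; simp at hlast; omega
        obtain ⟨r, hr⟩ := phi_head v' hv'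
        rw [hr] at h; simp [List.cons_prefix_cons] at h
      · rw [phi_cons_ne a v' ha, phi_cons_ne b w' hb] at h
        simp only [List.cons_prefix_cons] at h
        have ha1 : a = 1 := by rcases hv.head with h' | h' <;> omega
        have hb1 : b = 1 := by rcases hw.head with h' | h' <;> omega
        have hv' : v' ≠ [] := by
          rintro rfl; simp at hlast; omega
        have : v'.getLast? = some 0 := by
          cases v' with
          | nil => simp at hv'
          | cons a₂ v'' => rwa [List.getLast?_cons_cons] at hlast
        have := ih w' hv.tail hw.tail this h.2
        subst ha1; subst hb1
        simpa [List.cons_prefix_cons]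

/-- Parsing a prefix ending in `1`: it is a `phi`-image. -/
lemma pre_parse_one : ∀ (w z : List ℕ), z <+: phi w → z.getLast? = some 1 →
    ∃ y, z = phi y ∧ y <+: w := by
  intro w
  induction w with
  | nil => intro z h hl; rw [phi_nil, List.prefix_nil] at h; simp [h] at hl
  | cons b w' ih =>
    intro z h hl
    cases z with
    | nil => simp at hl
    | cons c z₁ =>
      by_cases hb : b = 0
      · subst hb
        simp only [phi_cons_zero, List.cons_prefix_cons] at h
        obtain ⟨rfl, h⟩ := h
        cases z₁ with
        | nil => simp at hl
        | cons c₂ z₂ =>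
          simp only [List.cons_prefix_cons] at h
          obtain ⟨rfl, h⟩ := h
          rcases List.eq_nil_or_concat z₂ with rfl | ⟨z₃, d, rfl⟩
          · exact ⟨[0], rfl, by simp⟩
          · simp only [List.concat_eq_append] at *
            have hl₂ : (z₃ ++ [d]).getLast? = some 1 := by
              have : ((0 :: 1 :: z₃) ++ [d]).getLast? = some 1 := by simpa using hl
              rw [List.getLast?_concat] at this
              rw [List.getLast?_concat]
              exact this
            obtain ⟨y', hy1, hy'⟩ := ih _ h hl₂
            exact ⟨0 :: y', by rw [phi_cons_zero, ← hy1], by simpa [List.cons_prefix_cons]⟩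
      · rw [phi_cons_ne b w' hb] at h
        simp only [List.cons_prefix_cons] at h
        obtain ⟨rfl, h⟩ := h
        cases z₁ with
        | nil => simp at hl
        | cons c₂ z₂ =>
          have hl₂ : (c₂ :: z₂).getLast? = some 1 := by
            rwa [List.getLast?_cons_cons] at hl
          obtain ⟨y', hy1, hy'⟩ := ih _ h hl₂
          exact ⟨b :: y', by rw [phi_cons_ne b y' hb, ← hy1], by simpa [List.cons_prefix_cons]⟩

/-- Any `1` in a `phi`-image is preceded by a `0`. -/
lemma sprev : ∀ (u s r : List ℕ), s ++ 1 :: r = phi u → ∃ s', s = s' ++ [0] := by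
  intro u
  induction u with
  | nil => intro s r h; simp at h
  | cons b u' ih =>
    intro s r h
    by_cases hb : b = 0
    · subst hb
      rw [phi_cons_zero] at h
      cases s with
      | nil => simp at h
      | cons c s' =>
        simp only [List.cons_append, List.cons.injEq] at h
        obtain ⟨rfl, h⟩ := h
        cases s' with
        | nil =>
          exact ⟨[], by simp⟩
        | cons c₂ s'' =>
          simp only [List.cons_append, List.cons.injEq] at h
          obtain ⟨rfl, h⟩ := h
          obtain ⟨s₃, rfl⟩ := ih s'' r h
          exact ⟨0 :: 1 :: s₃, by simp⟩
    · rw [phi_cons_ne b u' hb] at h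
      cases s with
      | nil => simp at h
      | cons c s' =>
        simp only [List.cons_append, List.cons.injEq] at h
        obtain ⟨rfl, h⟩ := h
        obtain ⟨s₃, rfl⟩ := ih s' r h
        exact ⟨0 :: s₃, by simp⟩

/-- An infix starting with `1` can be extended to the left by `0`. -/
lemma one_preceded {z u : List ℕ} (h : (1 :: z) <:+: phi u) : (0 :: 1 :: z) <:+: phi u := by
  obtain ⟨s, t, hst⟩ := h
  have : s ++ 1 :: (z ++ t) = phi u := by simpa using hst
  obtain ⟨s', rfl⟩ := sprev u s (z ++ t) this
  exact ⟨s', t, by simpa using hst⟩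

lemma no11 (u : List ℕ) : ¬ ([1, 1] <:+: phi u) := by
  rintro ⟨s, t, h⟩
  have h' : (s ++ [1]) ++ 1 :: t = phi u := by simpa using h
  obtain ⟨s', hs⟩ := sprev u (s ++ [1]) t h'
  have := congrArg List.getLast? hs
  simp at this

/-- Infix desubstitution with a trailing `0` for right alignment. -/
lemma infix_desub {v u : List ℕ} (hv : Bin v) (hu : Bin u)
    (h : (phi v ++ [0]) <:+: phi u) : ∃ d, (v ++ [d]) <:+: u := by
  rcases List.eq_nil_or_concat v with rfl | ⟨v₀, a, rfl⟩
  · -- [0] <:+: phi u, so u ≠ []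
    have hne : u ≠ [] := by
      rintro rfl
      simpa using h.length_le
    cases u with
    | nil => simp at hne
    | cons d u' => exact ⟨d, ⟨[], u', by simp⟩⟩
  · simp only [List.concat_eq_append] at *
    obtain ⟨s, t, hst⟩ := h
    obtain ⟨r, hr⟩ := phi_head (v₀ ++ [a]) (by simp)
    have hpre : (s ++ [0]) <+: phi u :=
      ⟨r ++ [0] ++ t, by rw [hr] at hst; simpa using hst⟩
    obtain ⟨u₁, u₂, rfl, rfl⟩ := prefix_align u s hpre
    have hcancel : (phi (v₀ ++ [a]) ++ [0]) <+: phi u₂ := by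
      refine ⟨t, ?_⟩
      have := hst
      rw [phi_append] at this
      apply List.append_cancel_left (as := phi u₁)
      simpa using this
    obtain ⟨d, hd⟩ := pre_desub _ _ hv (hu.of_append_right) hcancel
    exact ⟨d, hd.isInfix.trans ⟨u₁, [], by simp⟩⟩

/-- Infix cancellation: `phi v <:+: phi u` with `v` ending in `0`. -/
lemma infix_cancel {v u : List ℕ} (hv : Bin v) (hu : Bin u) (hlast : v.getLast? = some 0)
    (h : phi v <:+: phi u) : v <:+: u := by
  have hvne : v ≠ [] := by rintro rfl; simp at hlast
  obtain ⟨s, t, hst⟩ := h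
  obtain ⟨r, hr⟩ := phi_head v hvne
  have hpre : (s ++ [0]) <+: phi u := ⟨r ++ t, by rw [hr] at hst; simpa using hst⟩
  obtain ⟨u₁, u₂, rfl, rfl⟩ := prefix_align u s hpre
  have hcancel : phi v <+: phi u₂ := by
    refine ⟨t, ?_⟩
    rw [phi_append] at hst
    apply List.append_cancel_left (as := phi u₁)
    simpa using hst
  exact (pre_cancel v u₂ hv hu.of_append_right hlast hcancel).isInfix.trans ⟨u₁, [], by simp⟩

/-- An infix of a `phi`-image starting with `0` and ending with `1` is a `phi`-image
of an infix. -/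
lemma wparse {z u : List ℕ} (h : z <:+: phi u) (hhead : ∃ z₀, z = 0 :: z₀)
    (hlast : z.getLast? = some 1) : ∃ y, z = phi y ∧ y <:+: u := by
  obtain ⟨z₀, rfl⟩ := hhead
  obtain ⟨s, t, hst⟩ := h
  have hpre : (s ++ [0]) <+: phi u := ⟨z₀ ++ t, by simpa using hst⟩
  obtain ⟨u₁, u₂, rfl, rfl⟩ := prefix_align u s hpre
  have hz : (0 :: z₀) <+: phi u₂ := by
    refine ⟨t, ?_⟩
    rw [phi_append] at hst
    apply List.append_cancel_left (as := phi u₁)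
    simpa using hst
  obtain ⟨y, hy, hy'⟩ := pre_parse_one u₂ _ hz hlast
  exact ⟨y, hy, hy'.isInfix.trans ⟨u₁, [], by simp⟩⟩

/-! ### Fibonacci word basics -/

lemma fib_rec (n : ℕ) : fibWord (n + 3) = fibWord (n + 2) ++ fibWord (n + 1) := rfl

lemma fib_rec' {k : ℕ} (hk : 3 ≤ k) : fibWord k = fibWord (k - 1) ++ fibWord (k - 2) := by
  obtain ⟨n, rfl⟩ : ∃ n, k = n + 3 := ⟨k - 3, by omega⟩
  rfl

lemma fib_bin (k : ℕ) (hk : 2 ≤ k) : Bin (fibWord k) := by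
  induction k using Nat.strong_induction_on with
  | _ k ih =>
    match k, hk with
    | 2, _ => intro c hc; simp [fibWord] at hc; omega
    | 3, _ => intro c hc; simp [fibWord] at hc; rcases hc with h | h <;> omega
    | (n+4), _ =>
      rw [fib_rec]
      intro c hc
      rcases List.mem_append.mp hc with h | h
      · exact ih (n+3) (by omega) (by omega) c h
      · exact ih (n+2) (by omega) (by omega) c h

lemma two_not_mem_fib (k : ℕ) (hk : 2 ≤ k) : (2 : ℕ) ∉ fibWord k := by
  intro h
  rcases fib_bin k hk 2 h with h' | h' <;> omega

lemma phi_fib (k : ℕ) (hk : 1 ≤ k) : fibWord (k + 1) = phi (fibWord k) := by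
  induction k using Nat.strong_induction_on with
  | _ k ih =>
    match k, hk with
    | 1, _ => rfl
    | 2, _ => rfl
    | (n+3), _ =>
      rw [fib_rec, fib_rec n, phi_append,
        ← ih (n+2) (by omega) (by omega), ← ih (n+1) (by omega) (by omega)]
      rfl

lemma fib_prefix_succ (k : ℕ) (hk : 2 ≤ k) : fibWord k <+: fibWord (k + 1) := by
  rw [fib_rec' (k := k + 1) (by omega)]
  simp

lemma fib_prefix {k m : ℕ} (hk : 2 ≤ k) (hkm : k ≤ m) : fibWord k <+: fibWord m := by
  induction m with
  | zero => omega
  | succ m ihm =>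
    rcases Nat.lt_or_ge k (m + 1) with h | h
    · exact (ihm (by omega)).trans (fib_prefix_succ m (by omega))
    · have : k = m + 1 := by omega
      subst this
      exact List.prefix_refl _

lemma fib_head {k : ℕ} (hk : 2 ≤ k) : ∃ r, fibWord k = 0 :: r := by
  have := fib_prefix (k := 2) (m := k) le_rfl hk
  obtain ⟨t, ht⟩ := this
  exact ⟨t, by rw [← ht]; rfl⟩

/-- Length of the k-th Fibonacci word. -/
def fl (k : ℕ) : ℕ := (fibWord k).length

lemma fl_rec {k : ℕ} (hk : 3 ≤ k) : fl k = fl (k - 1) + fl (k - 2) := by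
  rw [fl, fib_rec' hk, List.length_append]; rfl

lemma fl_two : fl 2 = 1 := rfl
lemma fl_three : fl 3 = 2 := rfl
lemma fl_four : fl 4 = 3 := rfl

lemma fl_mono {k m : ℕ} (hk : 2 ≤ k) (hkm : k ≤ m) : fl k ≤ fl m :=
  (fib_prefix hk hkm).length_le

lemma fl_pos {k : ℕ} (hk : 2 ≤ k) : 1 ≤ fl k := fl_two ▸ fl_mono le_rfl hk

lemma fl_ge_two {k : ℕ} (hk : 3 ≤ k) : 2 ≤ fl k := fl_three ▸ fl_mono (by omega) hk

/-! ### The palindromic prefixes -/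

/-- `fibWord k` minus its last two letters. -/
def eta (k : ℕ) : List ℕ := (fibWord k).take (fl k - 2)

/-- The last two letters of `fibWord k`. -/
def tk (k : ℕ) : List ℕ := if Even k then [1, 0] else [0, 1]

lemma eta_rec {k : ℕ} (hk : 5 ≤ k) : eta k = fibWord (k - 1) ++ eta (k - 2) := by
  have h2 : 2 ≤ fl (k - 2) := fl_ge_two (by omega)
  have hrec : fl k = fl (k-1) + fl (k-2) := fl_rec (by omega)
  rw [eta, fib_rec' (by omega), List.take_append]
  congr 1
  · rw [List.take_of_length_le]
    show fl (k-1) ≤ _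
    omega
  · rw [eta]
    congr 1
    show fl k - 2 - fl (k - 1) = fl (k-2) - 2
    omega

lemma fib_eta_tk {k : ℕ} (hk : 3 ≤ k) : fibWord k = eta k ++ tk k := by
  induction k using Nat.strong_induction_on with
  | _ k ih =>
    match k, hk with
    | 3, _ => decide
    | 4, _ => decide
    | (n+5), _ =>
      have h5 : fibWord (n+5) = fibWord (n+4) ++ fibWord (n+3) := fib_rec (n+2)
      have h3 : fibWord (n+3) = eta (n+3) ++ tk (n+3) := ih _ (by omega) (by omega)
      have hparity : Even (n+5) ↔ Even (n+3) := by
        constructor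
        · rintro ⟨m, hm⟩; exact ⟨m - 1, by omega⟩
        · rintro ⟨m, hm⟩; exact ⟨m + 1, by omega⟩
      have htk : tk (n+5) = tk (n+3) := by
        unfold tk
        exact if_congr hparity rfl rfl
      have her : eta (n+5) = fibWord (n+4) ++ eta (n+3) := eta_rec (by omega)
      rw [her, h5, h3, htk, List.append_assoc]

lemma phi_eta {k : ℕ} (hk : 4 ≤ k) : phi (eta (k - 1)) ++ [0] = eta k := by
  induction k using Nat.strong_induction_on with
  | _ k ih =>
    match k, hk with
    | 4, _ => decide
    | 5, _ => decide
    | (n+6), _ =>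
      have h1 : eta (n + 5) = fibWord (n + 4) ++ eta (n + 3) := eta_rec (by omega)
      have h2 : eta (n + 6) = fibWord (n + 5) ++ eta (n + 4) := eta_rec (by omega)
      show phi (eta (n + 5)) ++ [0] = eta (n + 6)
      rw [h1, h2, phi_append, List.append_assoc]
      congr 1
      · exact (phi_fib (n + 4) (by omega)).symm
      · exact ih (n + 4) (by omega) (by omega)

lemma eta_suffix {k : ℕ} (hk : 3 ≤ k) : eta k <:+ eta (k + 1) := by
  induction k using Nat.strong_induction_on with
  | _ k ih =>
    match k, hk with
    | 3, _ =>
      have h3 : eta 3 = [] := rfl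
      rw [h3]
      exact List.nil_suffix
    | (n+4), _ =>
      have e1 := phi_eta (k := n+4) (by omega)
      have e2 := phi_eta (k := n+5) (by omega)
      simp only [show n+4-1 = n+3 from rfl] at e1
      simp only [show n+5-1 = n+4 from rfl] at e2
      have h : phi (eta (n+3)) ++ [0] <:+ phi (eta (n+4)) ++ [0] := by
        obtain ⟨s, hs⟩ := phi_suffix (ih (n+3) (by omega) (by omega))
        exact ⟨s, by rw [← List.append_assoc, hs]⟩
      rw [e1, e2] at h
      exact h


lemma eta_bin {k : ℕ} (hk : 2 ≤ k) : Bin (eta k) :=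
  (fib_bin k hk).infix ((fibWord k).take_prefix _).isInfix

/-! ### Finite enumeration of infixes, for base cases -/

/-- All infixes of `w`. -/
def allInfix (w : List ℕ) : List (List ℕ) := w.tails.flatMap List.inits

lemma mem_allInfix {y w : List ℕ} (h : y <:+: w) : y ∈ allInfix w := by
  obtain ⟨t, hp, hs⟩ := List.infix_iff_prefix_suffix.mp h
  exact List.mem_flatMap.mpr ⟨t, (List.mem_tails _ _).mpr hs, (List.mem_inits _ _).mpr hp⟩

/-! ### Right-special factors are suffixes of `eta (k-1)` -/

lemma suffix_append_singleton {a b : List ℕ} (c : ℕ) (h : a <:+ b) :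
    a ++ [c] <:+ b ++ [c] := by
  obtain ⟨s, rfl⟩ := h
  exact ⟨s, by rw [← List.append_assoc]⟩

lemma Bin.concat {l : List ℕ} (h : Bin l) {c : ℕ} (hc : c = 0 ∨ c = 1) : Bin (l ++ [c]) := by
  intro d hd
  rcases List.mem_append.mp hd with h' | h'
  · exact h d h'
  · simp at h'; omega

lemma append_singleton_inj {a b : List ℕ} {c : ℕ} (h : a ++ [c] = b ++ [c]) : a = b := by
  have := congrArg List.dropLast h
  simpa using this

lemma right_special {k : ℕ} (hk : 5 ≤ k) : ∀ x : List ℕ,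
    (x ++ [0]) <:+: fibWord k → (x ++ [1]) <:+: fibWord k → x <:+ eta (k - 1) := by
  induction k using Nat.strong_induction_on with
  | _ k ih =>
    match k, hk with
    | 5, _ =>
      intro x h0 h1
      have hx : x ++ [0] ∈ allInfix (fibWord 5) := mem_allInfix h0
      have key : ∀ z ∈ allInfix (fibWord 5), z.getLast? = some 0 →
          ((z.dropLast ++ [1]) <:+: fibWord 5) → z.dropLast <:+ eta 4 := by decide
      have := key _ hx (by simp) (by rw [List.dropLast_concat]; exact h1)
      rwa [List.dropLast_concat] at this
    | (m+6), _ =>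
      intro x h0 h1
      have hku : fibWord (m+6) = phi (fibWord (m+5)) := phi_fib (m+5) (by omega)
      set u := fibWord (m+5) with hudef
      have hubin : Bin u := fib_bin _ (by omega)
      rw [hku] at h0 h1
      have e1 : phi (eta (m+4)) ++ [0] = eta (m+5) := by
        have := phi_eta (k := m+5) (by omega)
        simpa [show m+5-1 = m+4 from rfl] using this
      show x <:+ eta (m+5)
      cases x with
      | nil => exact List.nil_suffix
      | cons c₀ x₁ =>
        have hxbin : Bin ((c₀ :: x₁) ++ [1]) := fun d hd => mem_phi_binary (h1.sublist.mem hd)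
        have hc₀ : c₀ = 0 ∨ c₀ = 1 := hxbin c₀ (by simp)
        have hlast1 : ((c₀ :: x₁) ++ [1]).getLast? = some 1 := List.getLast?_concat
        rcases hc₀ with rfl | rfl
        · -- head is 0
          obtain ⟨y₂, hy₂, hy₂inf⟩ := wparse h1 ⟨x₁ ++ [1], by simp⟩ hlast1
          obtain ⟨y, rfl⟩ := phi_getLast_one (y := y₂) (by rw [← hy₂]; exact hlast1)
          rw [phi_concat_zero] at hy₂
          have hxeq : (0 :: x₁ : List ℕ) = phi y ++ [0] := by
            apply append_singleton_inj (c := 1)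
            simpa using hy₂
          have hybin : Bin y := by
            have hb : Bin (y ++ [0]) := hubin.infix hy₂inf
            exact fun d hd => hb d (by simp [hd])
          have hy0 : (y ++ [0]) <:+: u := hy₂inf
          have hy1 : (y ++ [1]) <:+: u := by
            have hin : (phi (y ++ [1]) ++ [0]) <:+: phi u := by
              rw [phi_concat_one]
              have h0' := h0
              rw [show ((0:ℕ) :: x₁) ++ [0] = (0 :: x₁) ++ [0] from rfl, hxeq] at h0'
              simpa [List.append_assoc] using h0'
            obtain ⟨d, hd⟩ := infix_desub (hybin.concat (Or.inr rfl)) hubin hin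
            exact ((y ++ [1]).prefix_append [d]).isInfix.trans hd
          have hy : y <:+ eta (m+4) := ih (m+5) (by omega) (by omega) y hy0 hy1
          rw [hxeq, ← e1]
          exact suffix_append_singleton 0 (phi_suffix hy)
        · -- head is 1
          have h1' : ((0:ℕ) :: 1 :: (x₁ ++ [1])) <:+: phi u :=
            one_preceded (by simpa using h1)
          have hlast' : ((0:ℕ) :: 1 :: (x₁ ++ [1])).getLast? = some 1 := by
            rw [show (0:ℕ) :: 1 :: (x₁ ++ [1]) = ((0:ℕ) :: 1 :: x₁) ++ [1] by simp,
              List.getLast?_concat]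
          obtain ⟨y₂, hy₂, hy₂inf⟩ := wparse h1' ⟨1 :: (x₁ ++ [1]), rfl⟩ hlast'
          obtain ⟨y₃, rfl⟩ := phi_eq_cons_cons hy₂.symm
          obtain ⟨y₄, hy₄⟩ := phi_getLast_one (y := 0 :: y₃) (by rw [← hy₂]; exact hlast')
          cases y₄ with
          | nil =>
            exfalso
            have hy₃ : y₃ = [] := by simpa using hy₄
            rw [hy₃] at hy₂
            simp [phi_cons_zero] at hy₂
          | cons c₄ y =>
            have hc₄y : c₄ = 0 ∧ y₃ = y ++ [0] := by
              constructor
              · have := congrArg (List.head? ·) hy₄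
                simpa using this.symm
              · have := congrArg (List.tail ·) hy₄
                simpa using this
            obtain ⟨rfl, rfl⟩ := hc₄y
            rw [show ((0:ℕ) :: (y ++ [0])) = (0 :: y) ++ [0] from rfl, phi_concat_zero,
              phi_cons_zero] at hy₂
            -- hy₂ : 0::1::(x₁++[1]) = 0::1::phi y ++ [0,1]
            have hxeq : x₁ = phi y ++ [0] := by
              apply append_singleton_inj (c := 1)
              have h' : x₁ ++ [1] = phi y ++ [0, 1] := by
                simpa using hy₂
              simpa using h'
            have hybin : Bin (0 :: y) := by
              have hb : Bin ((0 :: y) ++ [0]) := by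
                have := hubin.infix hy₂inf
                simpa using this
              exact fun d hd => hb d (by simp at hd ⊢; tauto)
            have hz0 : ((0 :: y) ++ [0]) <:+: u := by simpa using hy₂inf
            have hz1 : ((0 :: y) ++ [1]) <:+: u := by
              have h0' := h0
              rw [show ((1:ℕ) :: x₁) ++ [0] = 1 :: (x₁ ++ [0]) from rfl, hxeq] at h0'
              have h0'' : ((0:ℕ) :: 1 :: ((phi y ++ [0]) ++ [0])) <:+: phi u :=
                one_preceded h0'
              have hin : (phi ((0 :: y) ++ [1]) ++ [0]) <:+: phi u := by
                rw [show ((0:ℕ) :: y) ++ [1] = 0 :: (y ++ [1]) from rfl, phi_cons_zero,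
                  phi_concat_one]
                simpa [List.append_assoc] using h0''
              obtain ⟨d, hd⟩ := infix_desub (hybin.concat (Or.inr rfl)) hubin hin
              exact (((0 :: y) ++ [1]).prefix_append [d]).isInfix.trans hd
            have hy : (0 :: y) <:+ eta (m+4) := ih (m+5) (by omega) (by omega) _ hz0 hz1
            have hstep : ((1:ℕ) :: x₁) <:+ phi (0 :: y) ++ [0] := by
              rw [phi_cons_zero, hxeq]
              exact ⟨[0], by simp⟩
            have hfin : phi (0 :: y) ++ [0] <:+ eta (m+5) := by
              rw [← e1]
              exact suffix_append_singleton 0 (phi_suffix hy)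
            exact hstep.trans hfin

/-! ### The long suffix occurs only at the end -/

/-- The last letter of `fibWord (k-1)`, which is also the letter `flip(last letter
of `fibWord (k-2)`)`. -/
def eCh (k : ℕ) : ℕ := if Even k then 1 else 0

/-- The suffix of `fibWord k` of length `fl (k-2) + 1`. -/
def uWord (k : ℕ) : List ℕ := eCh k :: fibWord (k - 2)

/-- That suffix with its last letter flipped. -/
def vWord (k : ℕ) : List ℕ := eCh k :: ((fibWord (k - 2)).dropLast ++ [eCh k])

lemma Bin.cons {c : ℕ} (hc : c = 0 ∨ c = 1) {l : List ℕ} (h : Bin l) : Bin (c :: l) := by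
  intro d hd
  rcases List.mem_cons.mp hd with rfl | h'
  · exact hc
  · exact h d h'

lemma Bin.dropLast {l : List ℕ} (h : Bin l) : Bin l.dropLast :=
  h.infix (List.dropLast_prefix l).isInfix

lemma even_add_two (a : ℕ) : Even (a + 2) ↔ Even a := by
  constructor
  · rintro ⟨b, hb⟩; exact ⟨b - 1, by omega⟩
  · rintro ⟨b, hb⟩; exact ⟨b + 1, by omega⟩

lemma fib_concat {k : ℕ} (hk : 2 ≤ k) :
    fibWord k = (fibWord k).dropLast ++ [if Even k then 0 else 1] := by
  match k, hk with
  | 2, _ => decide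
  | (n+3), _ =>
    rw [fib_eta_tk (by omega)]
    unfold tk
    rcases Nat.even_or_odd (n+3) with h | h
    · rw [if_pos h, if_pos h,
        show eta (n+3) ++ [1, 0] = (eta (n+3) ++ [1]) ++ [0] by simp,
        List.dropLast_concat]
    · rw [if_neg (by simpa [Nat.not_even_iff_odd] using h),
        if_neg (by simpa [Nat.not_even_iff_odd] using h),
        show eta (n+3) ++ [0, 1] = (eta (n+3) ++ [0]) ++ [1] by simp,
        List.dropLast_concat]

lemma fib_dropLast {k : ℕ} (hk : 3 ≤ k) :
    (fibWord k).dropLast = eta k ++ [if Even k then 1 else 0] := by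
  rw [fib_eta_tk hk]
  unfold tk
  rcases Nat.even_or_odd k with h | h
  · rw [if_pos h, if_pos h,
      show eta k ++ [1, 0] = (eta k ++ [1]) ++ [0] by simp, List.dropLast_concat]
  · rw [if_neg (by simpa [Nat.not_even_iff_odd] using h),
      if_neg (by simpa [Nat.not_even_iff_odd] using h),
      show eta k ++ [0, 1] = (eta k ++ [0]) ++ [1] by simp, List.dropLast_concat]

/-- `uWord k` is a suffix of `fibWord k`. -/
lemma uWord_suffix {k : ℕ} (hk : 4 ≤ k) : uWord k <:+ fibWord k := by
  have hrec : fibWord k = fibWord (k-1) ++ fibWord (k-2) := fib_rec' (by omega)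
  have hcat : fibWord (k-1) = (fibWord (k-1)).dropLast ++ [if Even (k-1) then 0 else 1] :=
    fib_concat (by omega)
  have hech : (if Even (k-1) then (0:ℕ) else 1) = eCh k := by
    unfold eCh
    by_cases h : Even k
    · rw [if_pos h, if_neg (by simp only [Nat.even_iff] at h ⊢; omega)]
    · rw [if_neg h, if_pos (by simp only [Nat.even_iff] at h ⊢; omega)]
  refine ⟨(fibWord (k-1)).dropLast, ?_⟩
  rw [hrec]
  conv_rhs => rw [hcat]
  rw [hech]
  simp [uWord]

/-- `vWord` never occurs. -/
lemma vWord_not_infix {k : ℕ} (hk : 5 ≤ k) : ¬ (vWord k <:+: fibWord k) := by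
  induction k using Nat.strong_induction_on with
  | _ k ih =>
    match k, hk with
    | 5, _ => decide
    | 6, _ => decide
    | (n+7), _ =>
      intro h
      have hku : fibWord (n+7) = phi (fibWord (n+6)) := phi_fib (n+6) (by omega)
      rw [hku] at h
      rcases Nat.even_or_odd (n+7) with he | ho
      · -- even: vWord contains [1,1]
        have hech : eCh (n+7) = 1 := by unfold eCh; rw [if_pos he]
        have hdl : (fibWord (n+5)).dropLast = eta (n+5) ++ [1] := by
          rw [fib_dropLast (by omega), if_pos (by rwa [← even_add_two (n+5)])]
        have h11 : [1, 1] <:+: vWord (n+7) := by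
          unfold vWord
          rw [hech, show (n+7) - 2 = n+5 from rfl, hdl]
          exact ⟨1 :: eta (n+5), [], by simp⟩
        exact no11 _ (h11.trans h)
      · -- odd
        have hno : ¬ Even (n+7) := by simp only [Nat.not_even_iff_odd]; exact ho
        have hech : eCh (n+7) = 0 := by unfold eCh; rw [if_neg hno]
        have hev4 : Even (n+4) := by
          simp only [Nat.even_iff] at hno ⊢; omega
        set G := (fibWord (n+4)).dropLast with hGdef
        have hG : fibWord (n+4) = G ++ [0] := by
          conv_lhs => rw [fib_concat (k := n+4) (by omega)]
          rw [if_pos hev4]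
        have hGbin : Bin G := (fib_bin (n+4) (by omega)).dropLast
        have hdl : (fibWord (n+5)).dropLast = phi G ++ [0] := by
          rw [phi_fib (n+4) (by omega), hG, phi_concat_zero,
            show phi G ++ [0, 1] = (phi G ++ [0]) ++ [1] by simp, List.dropLast_concat]
        have hveq : vWord (n+7) = phi ((1 :: G) ++ [1]) ++ [0] := by
          unfold vWord
          rw [hech, show (n+7) - 2 = n+5 from rfl, hdl]
          rw [show ((1:ℕ) :: G) ++ [1] = 1 :: (G ++ [1]) from rfl, phi_cons_ne _ _ (by omega),
            phi_concat_one]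
          simp
        rw [hveq] at h
        have hbin1 : Bin ((1 :: G) ++ [1]) :=
          (Bin.cons (Or.inr rfl) hGbin).concat (Or.inr rfl)
        obtain ⟨d, hd⟩ := infix_desub hbin1 (fib_bin (n+6) (by omega)) h
        have hv6 : vWord (n+6) <:+: fibWord (n+6) := by
          have hech6 : eCh (n+6) = 1 := by
            unfold eCh
            rw [if_pos (by simp only [Nat.even_iff] at hno ⊢; omega)]
          have : vWord (n+6) = (1 :: G) ++ [1] := by
            unfold vWord
            rw [hech6, show (n+6) - 2 = n+4 from rfl, ← hGdef]
            simp
          rw [this]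
          exact (((1 :: G) ++ [1]).prefix_append [d]).isInfix.trans hd
        exact ih (n+6) (by omega) (by omega) hv6

/-- The long suffix `uWord k` admits no right extension inside `fibWord k`. -/
lemma uWord_not_ext {k : ℕ} (hk : 5 ≤ k) : ∀ c, ¬ ((uWord k ++ [c]) <:+: fibWord k) := by
  induction k using Nat.strong_induction_on with
  | _ k ih =>
    match k, hk with
    | 5, _ =>
      intro c h
      have hc : c = 0 ∨ c = 1 := fib_bin 5 (by omega) c (h.sublist.mem (by simp))
      rcases hc with rfl | rfl <;> revert h <;> decide
    | 6, _ =>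
      intro c h
      have hc : c = 0 ∨ c = 1 := fib_bin 6 (by omega) c (h.sublist.mem (by simp))
      rcases hc with rfl | rfl <;> revert h <;> decide
    | (n+7), _ =>
      intro c h
      have hc : c = 0 ∨ c = 1 := fib_bin (n+7) (by omega) c (h.sublist.mem (by simp))
      have hku : fibWord (n+7) = phi (fibWord (n+6)) := phi_fib (n+6) (by omega)
      rw [hku] at h
      have hbin6 : Bin (fibWord (n+6)) := fib_bin (n+6) (by omega)
      have hbin5 : Bin (fibWord (n+5)) := fib_bin (n+5) (by omega)
      have hbin4 : Bin (fibWord (n+4)) := fib_bin (n+4) (by omega)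
      rcases Nat.even_or_odd (n+7) with he | ho
      · -- k even : uWord k = 1 :: fibWord (n+5), fibWord (n+5) = phi (fibWord (n+4))
        have hech : eCh (n+7) = 1 := by unfold eCh; rw [if_pos he]
        have h5 : fibWord (n+5) = phi (fibWord (n+4)) := phi_fib (n+4) (by omega)
        have hueq : uWord (n+7) = 1 :: phi (fibWord (n+4)) := by
          unfold uWord
          rw [hech, show (n+7) - 2 = n+5 from rfl, h5]
        rcases hc with rfl | rfl
        · -- c = 0
          have h' : ((0:ℕ) :: 1 :: (phi (fibWord (n+4)) ++ [0])) <:+: phi (fibWord (n+6)) := by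
            apply one_preceded
            rw [hueq] at h
            simpa using h
          have h'' : (phi ((0 :: fibWord (n+4))) ++ [0]) <:+: phi (fibWord (n+6)) := by
            rw [phi_cons_zero]
            simpa using h'
          obtain ⟨d, hd⟩ := infix_desub (Bin.cons (Or.inl rfl) hbin4) hbin6 h''
          have : (uWord (n+6) ++ [d]) <:+: fibWord (n+6) := by
            have hech6 : eCh (n+6) = 0 := by
              unfold eCh
              rw [if_neg (by simp only [Nat.even_iff] at he ⊢; omega)]
            unfold uWord
            rw [hech6, show (n+6) - 2 = n+4 from rfl]
            exact hd
          exact ih (n+6) (by omega) (by omega) d this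
        · -- c = 1
          have hev4 : ¬ Even (n+4) := by simp only [Nat.even_iff] at he ⊢; omega
          set D := (fibWord (n+4)).dropLast with hDdef
          have hD : fibWord (n+4) = D ++ [1] := by
            conv_lhs => rw [fib_concat (k := n+4) (by omega)]
            rw [if_neg hev4]
          have hDbin : Bin D := hbin4.dropLast
          have hstr : uWord (n+7) ++ [1] = 1 :: phi (D ++ [0]) := by
            rw [hueq, hD, phi_concat_one, phi_concat_zero]
            simp
          rw [hstr] at h
          have h' : ((0:ℕ) :: 1 :: phi (D ++ [0])) <:+: phi (fibWord (n+6)) :=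
            one_preceded h
          have h'' : phi ((0 :: D) ++ [0]) <:+: phi (fibWord (n+6)) := by
            rw [show ((0:ℕ) :: D) ++ [0] = 0 :: (D ++ [0]) from rfl, phi_cons_zero]
            simpa using h'
          have hv : ((0 :: D) ++ [0]) <:+: fibWord (n+6) :=
            infix_cancel ((Bin.cons (Or.inl rfl) hDbin).concat (Or.inl rfl)) hbin6
              List.getLast?_concat h''
          have : vWord (n+6) <:+: fibWord (n+6) := by
            have hech6 : eCh (n+6) = 0 := by
              unfold eCh
              rw [if_neg (by simp only [Nat.even_iff] at he ⊢; omega)]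
            unfold vWord
            rw [hech6, show (n+6) - 2 = n+4 from rfl, ← hDdef]
            simpa using hv
          exact vWord_not_infix (by omega) this
      · -- k odd : uWord k = 0 :: fibWord (n+5) = phi (1 :: fibWord (n+4))
        have hno : ¬ Even (n+7) := by simp only [Nat.not_even_iff_odd]; exact ho
        have hech : eCh (n+7) = 0 := by unfold eCh; rw [if_neg hno]
        have h5 : fibWord (n+5) = phi (fibWord (n+4)) := phi_fib (n+4) (by omega)
        have hueq : uWord (n+7) = phi (1 :: fibWord (n+4)) := by
          unfold uWord
          rw [hech, show (n+7) - 2 = n+5 from rfl, h5, phi_cons_ne _ _ (by omega)]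
        rcases hc with rfl | rfl
        · -- c = 0
          rw [hueq] at h
          obtain ⟨d, hd⟩ := infix_desub (Bin.cons (Or.inr rfl) hbin4) hbin6 h
          have : (uWord (n+6) ++ [d]) <:+: fibWord (n+6) := by
            have hech6 : eCh (n+6) = 1 := by
              unfold eCh
              rw [if_pos (by simp only [Nat.even_iff] at hno ⊢; omega)]
            unfold uWord
            rw [hech6, show (n+6) - 2 = n+4 from rfl]
            exact hd
          exact ih (n+6) (by omega) (by omega) d this
        · -- c = 1 : ends with [1,1]
          have hodd5 : ¬ Even (n+5) := by simp only [Nat.even_iff] at hno ⊢; omega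
          set E := (fibWord (n+5)).dropLast with hEdef
          have hE : fibWord (n+5) = E ++ [1] := by
            conv_lhs => rw [fib_concat (k := n+5) (by omega)]
            rw [if_neg hodd5]
          have h11 : [1, 1] <:+: (uWord (n+7) ++ [1]) := by
            unfold uWord
            rw [hech, show (n+7) - 2 = n+5 from rfl, hE]
            exact ⟨0 :: E, [], by simp⟩
          exact no11 _ (h11.trans h)

/-! ### From a suffixient set to the bound on `sre` -/

lemma sre_le_card {w : List ℕ} {S : Finset ℕ} (h : Suffixient w S) : sre w ≤ S.card := by
  classical
  rw [sre, ← Set.ncard_coe_finset]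
  have hch : ∀ y ∈ {y | Supermaximal w y}, ∃ j ∈ S, y <:+ w.take j :=
    fun y hy => h.2 y hy.1
  choose! f hfS hfsuf using hch
  refine Set.ncard_le_ncard_of_injOn f hfS ?_ S.finite_toSet
  intro y₁ h₁ y₂ h₂ hf
  have h2' : y₂ <:+ w.take (f y₁) := by rw [hf]; exact hfsuf y₂ h₂
  rcases List.suffix_or_suffix_of_suffix (hfsuf y₁ h₁) h2' with hc | hc
  · exact (h₁.2 y₂ h₂.1 hc).symm
  · exact h₂.2 y₁ h₁.1 hc

/-- Every nonempty word has the trivial suffixient set of all positions. -/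
lemma suffixient_trivial (w : List ℕ) (hw : w ≠ []) :
    Suffixient w (Finset.Icc 1 w.length) := by
  constructor
  · intro j hj
    simpa using Finset.mem_Icc.mp hj
  · rintro y ⟨x, a, -, rfl, s, t, hst⟩
    refine ⟨(s ++ (x ++ [a])).length, ?_, ?_⟩
    · rw [Finset.mem_Icc]
      constructor
      · simp
        omega
      · rw [← hst]
        simp
    · rw [← hst, List.take_left]
      exact List.suffix_append s _

/-! ### Infixes of `fibWord k ++ [2]` -/

lemma concat_eq_concat {a b : List ℕ} {c d : ℕ} (h : a ++ [c] = b ++ [d]) :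
    a = b ∧ c = d := by
  obtain ⟨h1, h2⟩ := List.append_inj' h (by simp)
  exact ⟨h1, by simpa using h2⟩

lemma infix_concat_cases {y F : List ℕ} {d : ℕ} (h : y <:+: F ++ [d]) :
    y <:+: F ∨ y <:+ F ++ [d] := by
  obtain ⟨s, t, hst⟩ := h
  rcases List.eq_nil_or_concat' t with rfl | ⟨t', e, rfl⟩
  · right; exact ⟨s, by simpa using hst⟩
  · left
    have h' : (s ++ y ++ t') ++ [e] = F ++ [d] := by simpa using hst
    obtain ⟨h1, -⟩ := concat_eq_concat h'
    exact ⟨s, t', h1⟩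

lemma suffix_getLast? {y z : List ℕ} (h : y <:+ z) (hy : y ≠ []) :
    z.getLast? = y.getLast? := by
  obtain ⟨s, rfl⟩ := h
  exact List.getLast?_append_of_ne_nil s hy

/-- An infix of `fibWord k ++ [2]` ending in a letter `≠ 2` is an infix of `fibWord k`. -/
lemma infix_fib_of_ne_two {k : ℕ} (hk : 2 ≤ k) {x : List ℕ} {c : ℕ} (hc : c ≠ 2)
    (h : (x ++ [c]) <:+: fibWord k ++ [2]) : (x ++ [c]) <:+: fibWord k := by
  rcases infix_concat_cases h with h' | h'
  · exact h'
  · exfalso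
    have := suffix_getLast? h' (by simp)
    rw [List.getLast?_concat, List.getLast?_concat] at this
    exact hc (by simpa using this.symm)

/-- An infix of `fibWord k ++ [2]` ending in `2` is a suffix. -/
lemma suffix_of_infix_two {k : ℕ} (hk : 2 ≤ k) {x : List ℕ}
    (h : (x ++ [2]) <:+: fibWord k ++ [2]) : (x ++ [2]) <:+ fibWord k ++ [2] := by
  obtain ⟨s, t, hst⟩ := h
  rcases List.eq_nil_or_concat' t with rfl | ⟨t', e, rfl⟩
  · exact ⟨s, by simpa using hst⟩
  · exfalso
    have h' : (s ++ (x ++ [2]) ++ t') ++ [e] = fibWord k ++ [2] := by simpa using hst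
    obtain ⟨h1, -⟩ := concat_eq_concat h'
    exact two_not_mem_fib k hk (by rw [← h1]; simp)

/-! ### The main suffixient-set lemma for `k ≥ 5` -/

lemma take_w {k j : ℕ} (hj : j ≤ fl k) :
    (fibWord k ++ [2]).take j = (fibWord k).take j := by
  rw [List.take_append]
  have : j - (fibWord k).length = 0 := by
    have : (fibWord k).length = fl k := rfl
    omega
  rw [this]
  simp

lemma take_fib_pred {j : ℕ} (hj : 3 ≤ j) :
    (fibWord j).take (fl j - 1) = eta j ++ [if Even j then 1 else 0] := by
  rw [← fib_dropLast hj, List.dropLast_eq_take]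
  rfl

lemma take_fib_of_prefix {k j n : ℕ} (hk : 2 ≤ j) (hjk : j ≤ k) (hn : n ≤ fl j) :
    (fibWord k).take n = (fibWord j).take n := by
  obtain ⟨r, hr⟩ := fib_prefix hk hjk
  rw [← hr, List.take_append]
  have : n - (fibWord j).length = 0 := by
    have : (fibWord j).length = fl j := rfl
    omega
  rw [this]
  simp

lemma rs_case {k : ℕ} (hk : 5 ≤ k) {x : List ℕ} {c : ℕ} (hc : c = 0 ∨ c = 1)
    (h0 : (x ++ [0]) <:+: fibWord k) (h1 : (x ++ [1]) <:+: fibWord k) :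
    (x ++ [c]) <:+ (fibWord k ++ [2]).take (fl (k-1) - 1) ∨
    (x ++ [c]) <:+ (fibWord k ++ [2]).take (fl k - 1) := by
  have hx : x <:+ eta (k-1) := right_special hk x h0 h1
  have hmono : fl (k-1) ≤ fl k := fl_mono (by omega) (by omega)
  have hfp : 1 ≤ fl k := fl_pos (by omega)
  have e1 : (fibWord k ++ [2]).take (fl (k-1) - 1)
      = eta (k-1) ++ [if Even (k-1) then 1 else 0] := by
    rw [take_w (by omega), take_fib_of_prefix (j := k-1) (by omega) (by omega) (by omega),
      take_fib_pred (by omega)]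
  have e2 : (fibWord k ++ [2]).take (fl k - 1) = eta k ++ [if Even k then 1 else 0] := by
    rw [take_w (by omega), take_fib_pred (by omega)]
  have hx2 : x <:+ eta k := by
    refine hx.trans ?_
    have := eta_suffix (k := k-1) (by omega)
    simpa [show k-1+1 = k from by omega] using this
  rcases hc with rfl | rfl <;> by_cases hev : Even k
  · left
    rw [e1, if_neg (by simp only [Nat.even_iff] at hev ⊢; omega)]
    exact suffix_append_singleton 0 hx
  · right
    rw [e2, if_neg hev]
    exact suffix_append_singleton 0 hx2
  · right
    rw [e2, if_pos hev]
    exact suffix_append_singleton 1 hx2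
  · left
    rw [e1, if_pos (by simp only [Nat.even_iff, Nat.not_even_iff] at hev ⊢; omega)]
    exact suffix_append_singleton 1 hx

lemma nonrs_case {k : ℕ} (hk : 5 ≤ k) {x : List ℕ} (hxF : x <:+ fibWord k)
    (hxlen : x.length ≤ fl (k-2)) :
    (x ++ [0]) <:+ (fibWord k ++ [2]).take (fl (k-2) + 1) := by
  have hsuf2 : fibWord (k-2) <:+ fibWord k := ⟨fibWord (k-1), (fib_rec' (by omega)).symm⟩
  have hlen2 : (fibWord (k-2)).length = fl (k-2) := rfl
  have hx2 : x <:+ fibWord (k-2) := by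
    rcases List.suffix_or_suffix_of_suffix hxF hsuf2 with h | h
    · exact h
    · have hxl : x.length = (fibWord (k-2)).length := by
        have := h.length_le
        omega
      rw [← h.eq_of_length (by omega)]
  have hpref : (fibWord k ++ [2]).take (fl (k-2) + 1) = fibWord (k-2) ++ [0] := by
    have hge : 2 ≤ fl (k-1) := fl_ge_two (by omega)
    have hfr : fl k = fl (k-1) + fl (k-2) := fl_rec (by omega)
    rw [take_w (by omega)]
    have hF : fibWord k = fibWord (k-2) ++ (fibWord (k-3) ++ fibWord (k-2)) := by
      rw [fib_rec' (k := k) (by omega), fib_rec' (k := k-1) (by omega)]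
      simp only [show k-1-1 = k-2 from by omega, show k-1-2 = k-3 from by omega,
        List.append_assoc]
    rw [hF, List.take_append,
      List.take_of_length_le (by omega : (fibWord (k-2)).length ≤ fl (k-2) + 1)]
    congr 1
    rw [hlen2, show fl (k-2) + 1 - fl (k-2) = 1 from by omega]
    obtain ⟨r, hr⟩ := fib_head (k := k-3) (by omega)
    rw [hr]
    rfl
  rw [hpref]
  exact suffix_append_singleton 0 hx2

lemma main_suffixient {k : ℕ} (hk : 5 ≤ k) :
    Suffixient (fibWord k ++ [2])
      ({fl (k-2) + 1, fl (k-1) - 1, fl k - 1, fl k + 1} : Finset ℕ) := by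
  have hf2 : 2 ≤ fl (k-1) := fl_ge_two (by omega)
  have hf2' : 2 ≤ fl (k-2) := fl_ge_two (by omega)
  have hfr : fl k = fl (k-1) + fl (k-2) := fl_rec (by omega)
  have hwlen : (fibWord k ++ [2]).length = fl k + 1 := by simp [fl]
  constructor
  · intro j hj
    rw [hwlen]
    have hmono : fl (k-1) ≤ fl k := fl_mono (by omega) (by omega)
    simp only [Finset.mem_insert, Finset.mem_singleton] at hj
    rcases hj with rfl | rfl | rfl | rfl <;> omega
  · rintro y ⟨x, c, ⟨a, b, hab, ha, hb⟩, rfl, hyinf⟩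
    have hcval : c = 0 ∨ c = 1 ∨ c = 2 := by
      have hc : c ∈ fibWord k ++ [2] := hyinf.sublist.mem (by simp)
      rcases List.mem_append.mp hc with h' | h'
      · rcases fib_bin k (by omega) c h' with h'' | h'' <;> simp [h'']
      · simp at h'; simp [h']
    rcases hcval with hc01 | hc01 | rfl
    rotate_right
    · -- c = 2 : suffix of the whole word
      refine ⟨fl k + 1, by simp, ?_⟩
      rw [← hwlen, List.take_length]
      exact suffix_of_infix_two (by omega) hyinf
    all_goals (
      replace hc01 : c = 0 ∨ c = 1 := by omega
      have hyF : (x ++ [c]) <:+: fibWord k :=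
        infix_fib_of_ne_two (by omega) (by omega) hyinf
      by_cases hboth : ((x ++ [0]) <:+: fibWord k) ∧ ((x ++ [1]) <:+: fibWord k)
      · rcases rs_case hk hc01 hboth.1 hboth.2 with h | h
        · exact ⟨fl (k-1) - 1, by simp, h⟩
        · exact ⟨fl k - 1, by simp, h⟩
      · -- x is a suffix of fibWord k
        have hxF : x <:+ fibWord k := by
          have h2 : (x ++ [2]) <:+: fibWord k ++ [2] := by
            rcases eq_or_ne a 2 with rfl | ha2
            · exact ha
            rcases eq_or_ne b 2 with rfl | hb2
            · exact hb
            exfalso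
            have hA : (x ++ [a]) <:+: fibWord k := infix_fib_of_ne_two (by omega) ha2 ha
            have hB : (x ++ [b]) <:+: fibWord k := infix_fib_of_ne_two (by omega) hb2 hb
            have hav : a = 0 ∨ a = 1 := fib_bin k (by omega) a (hA.sublist.mem (by simp))
            have hbv : b = 0 ∨ b = 1 := fib_bin k (by omega) b (hB.sublist.mem (by simp))
            apply hboth
            rcases hav with rfl | rfl <;> rcases hbv with rfl | rfl <;>
              first | (exact absurd rfl hab) | exact ⟨hA, hB⟩ | exact ⟨hB, hA⟩
          obtain ⟨s, hs⟩ := suffix_of_infix_two (by omega) h2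
          have hs' : (s ++ x) ++ [2] = fibWord k ++ [2] := by simpa using hs
          exact ⟨s, (concat_eq_concat hs').1⟩
        have hxlen : x.length ≤ fl (k-2) := by
          by_contra hlong
          push_neg at hlong
          have husuf : uWord k <:+ fibWord k := uWord_suffix (by omega)
          have hulen : (uWord k).length = fl (k-2) + 1 := by simp [uWord, fl]
          have hux : uWord k <:+ x := by
            rcases List.suffix_or_suffix_of_suffix husuf hxF with h | h
            · exact h
            · rw [h.eq_of_length (by have := h.length_le; omega)]
          have hbad : (uWord k ++ [c]) <:+: fibWord k :=
            (suffix_append_singleton c hux).isInfix.trans hyF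
          exact uWord_not_ext (by omega) c hbad
        rcases hc01 with rfl | rfl
        · exact ⟨fl (k-2) + 1, by simp, nonrs_case hk hxF hxlen⟩
        · exfalso
          apply hboth
          refine ⟨?_, hyF⟩
          have h0' := nonrs_case hk hxF hxlen
          have htw : (fibWord k ++ [2]).take (fl (k-2) + 1)
              = (fibWord k).take (fl (k-2) + 1) := take_w (by omega)
          rw [htw] at h0'
          exact h0'.isInfix.trans ((fibWord k).take_prefix _).isInfix )

lemma card_le_four (a b c d : ℕ) : ({a, b, c, d} : Finset ℕ).card ≤ 4 := by
  refine le_trans (Finset.card_insert_le _ _) ?_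
  have h2 := Finset.card_insert_le b ({c, d} : Finset ℕ)
  have h3 := Finset.card_insert_le c ({d} : Finset ℕ)
  have h4 : ({d} : Finset ℕ).card = 1 := Finset.card_singleton d
  omega

end ChiFib

theorem chi_fib_le_four (k : ℕ) (hk : 2 ≤ k) :
    sre (fibWord k ++ [2]) ≤ 4 ∧
    ∃ S : Finset ℕ, S.card ≤ 4 ∧ Suffixient (fibWord k ++ [2]) S := by
  by_cases h5 : 5 ≤ k
  · have hS := ChiFib.main_suffixient h5
    have hcard := ChiFib.card_le_four (ChiFib.fl (k-2) + 1) (ChiFib.fl (k-1) - 1)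
      (ChiFib.fl k - 1) (ChiFib.fl k + 1)
    exact ⟨(ChiFib.sre_le_card hS).trans hcard, _, hcard, hS⟩
  · have hw : (fibWord k ++ [2]) ≠ [] := by simp
    have hS := ChiFib.suffixient_trivial _ hw
    have hcard : (Finset.Icc 1 (fibWord k ++ [2]).length).card ≤ 4 := by
      rw [Nat.card_Icc]
      interval_cases k <;> simp [fibWord]
    exact ⟨(ChiFib.sre_le_card hS).trans hcard, _, hcard, hS⟩
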